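/- Let X ~ Bernoulli(p) with p ∈ [1/2, 1) and P_{Y|X} = BIBO(α,β) with α, β ∈ [0, 1/2) such that (1−α)(1−p) > βp. Then for every ε ∈ [p, (1−α)(1−p) + (1−β)p] = [P_c(X), P_c(X|Y)]: h(ε) = 1 − ζ(ε)·q if α(1−α)(1−p)² < β(1−β)p², and h(ε) = 1 − ζ̃(ε)·(1−q) if α(1−α)(1−p)² ≥ β(1−β)p², where q := α(1−p) + (1−β)p = Pr(Y = 1), ζ(ε) := ((1−α)(1−p) + (1−β)p − ε)/((1−β)p − α(1−p)), and ζ̃(ε) := ((1−α)(1−p) + (1−β)p − ε)/((1−α)(1−p) − βp). Moreover, in each case the supremum defining h(ε) is attained by a filter F ∈ ℱ with 𝒫(F) = ε: the Z-channel with crossover probability ζ(ε) from input 1 to output 0 in the first case, and the reverse Z-channel with crossover probability ζ̃(ε) from input 0 to output 1 in the second case (each embedded in ℱ with an all-zero third column). -/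

import Mathlib

open Finset

/-- Privacy `𝒫(F) = P_c(X|Z)` of a `2×3` filter, for a joint pmf `P` on `{0,1}²`. -/
noncomputable def privF2 (P : Fin 2 → Fin 2 → ℝ) (F : Fin 2 → Fin 3 → ℝ) : ℝ :=
  ∑ z, ⨆ x, ∑ y, P x y * F y z

/-- Utility `𝒰(F) = P_c(Y|Z)` of a `2×3` filter. -/
noncomputable def utilF2 (P : Fin 2 → Fin 2 → ℝ) (F : Fin 2 → Fin 3 → ℝ) : ℝ :=
  ∑ z, ⨆ y, (∑ x, P x y) * F y z

/-- `F ∈ ℱ`: `F` is a row-stochastic `2×3` matrix. -/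
def IsFilter2 (F : Fin 2 → Fin 3 → ℝ) : Prop :=
  (∀ y z, 0 ≤ F y z) ∧ ∀ y, ∑ z, F y z = 1

/-- The privacy-constrained guessing function `h(ε)` in the binary case. -/
noncomputable def hFun2 (P : Fin 2 → Fin 2 → ℝ) (ε : ℝ) : ℝ :=
  sSup {u | ∃ F, IsFilter2 F ∧ privF2 P F ≤ ε ∧ u = utilF2 P F}

lemma iSup_fin2 (f : Fin 2 → ℝ) : (⨆ x, f x) = max (f 0) (f 1) := by
  apply le_antisymm
  · exact ciSup_le fun x => by fin_cases x <;> simp [le_max_left, le_max_right]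
  · exact max_le (le_ciSup (Set.finite_range f).bddAbove 0)
      (le_ciSup (Set.finite_range f).bddAbove 1)

lemma col_bound (q lam mu c P00 P01 P10 P11 a b : ℝ)
    (ha : 0 ≤ a) (hb : 0 ≤ b) (hc : 0 ≤ c)
    (h1 : 1 - q ≤ lam + c * P00) (h2 : 0 ≤ mu + c * P01)
    (h3 : 0 ≤ lam + c * P10) (h4 : q ≤ mu + c * P11) :
    max ((1 - q) * a) (q * b)
      ≤ lam * a + mu * b + c * max (P00 * a + P01 * b) (P10 * a + P11 * b) := by
  apply max_le
  · have hm : c * (P00 * a + P01 * b) ≤ c * max (P00 * a + P01 * b) (P10 * a + P11 * b) :=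
      mul_le_mul_of_nonneg_left (le_max_left _ _) hc
    nlinarith [mul_le_mul_of_nonneg_right h1 ha, mul_le_mul_of_nonneg_right h2 hb]
  · have hm : c * (P10 * a + P11 * b) ≤ c * max (P00 * a + P01 * b) (P10 * a + P11 * b) :=
      mul_le_mul_of_nonneg_left (le_max_right _ _) hc
    nlinarith [mul_le_mul_of_nonneg_right h3 ha, mul_le_mul_of_nonneg_right h4 hb]

lemma util_le (P : Fin 2 → Fin 2 → ℝ) (lam mu c q : ℝ) (hc : 0 ≤ c)
    (hq0 : P 0 0 + P 1 0 = 1 - q) (hq1 : P 0 1 + P 1 1 = q)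
    (h1 : 1 - q ≤ lam + c * P 0 0) (h2 : 0 ≤ mu + c * P 0 1)
    (h3 : 0 ≤ lam + c * P 1 0) (h4 : q ≤ mu + c * P 1 1)
    (F : Fin 2 → Fin 3 → ℝ) (hF : IsFilter2 F) :
    utilF2 P F ≤ lam + mu + c * privF2 P F := by
  obtain ⟨hFnn, hFrow⟩ := hF
  have key : ∀ z : Fin 3,
      max ((1 - q) * F 0 z) (q * F 1 z)
        ≤ lam * F 0 z + mu * F 1 z
          + c * max (P 0 0 * F 0 z + P 0 1 * F 1 z) (P 1 0 * F 0 z + P 1 1 * F 1 z) :=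
    fun z => col_bound q lam mu c _ _ _ _ _ _ (hFnn 0 z) (hFnn 1 z) hc h1 h2 h3 h4
  have e1 := hFrow 0
  have e2 := hFrow 1
  simp only [Fin.sum_univ_three] at e1 e2
  have elam : lam * F 0 0 + lam * F 0 1 + lam * F 0 2 = lam := by linear_combination lam * e1
  have emu : mu * F 1 0 + mu * F 1 1 + mu * F 1 2 = mu := by linear_combination mu * e2
  simp only [utilF2, privF2, Fin.sum_univ_two, Fin.sum_univ_three, iSup_fin2]
  rw [hq0, hq1]
  linarith [key 0, key 1, key 2]

set_option maxHeartbeats 2000000 in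
/-- Theorem 2: closed form of `h` for `X ~ Bernoulli(p)` and
`P_{Y|X} = BIBO(α,β)`, together with the optimality of the Z-channel `Z(ζ(ε))`
(respectively the reverse Z-channel `Z̃(ζ̃(ε))`), embedded in `ℱ` with an all-zero
third column. -/
theorem hFun_binary_closed_form (p α β : ℝ)
    (hp : p ∈ Set.Ico (1 / 2 : ℝ) 1)
    (hα : α ∈ Set.Ico (0 : ℝ) (1 / 2))
    (hβ : β ∈ Set.Ico (0 : ℝ) (1 / 2))
    (hnt : β * p < (1 - α) * (1 - p))
    (P : Fin 2 → Fin 2 → ℝ)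
    (h00 : P 0 0 = (1 - p) * (1 - α)) (h01 : P 0 1 = (1 - p) * α)
    (h10 : P 1 0 = p * β) (h11 : P 1 1 = p * (1 - β)) :
    ∀ ε ∈ Set.Icc p ((1 - α) * (1 - p) + (1 - β) * p),
      (α * (1 - α) * (1 - p) ^ 2 < β * (1 - β) * p ^ 2 →
        (let q : ℝ := α * (1 - p) + (1 - β) * p
         let ζ : ℝ := ((1 - α) * (1 - p) + (1 - β) * p - ε) / ((1 - β) * p - α * (1 - p))
         let F : Fin 2 → Fin 3 → ℝ := ![![1, 0, 0], ![ζ, 1 - ζ, 0]]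
         hFun2 P ε = 1 - ζ * q ∧
         IsFilter2 F ∧ privF2 P F = ε ∧ utilF2 P F = hFun2 P ε)) ∧
      (β * (1 - β) * p ^ 2 ≤ α * (1 - α) * (1 - p) ^ 2 →
        (let q : ℝ := α * (1 - p) + (1 - β) * p
         let ζ' : ℝ := ((1 - α) * (1 - p) + (1 - β) * p - ε) / ((1 - α) * (1 - p) - β * p)
         let F : Fin 2 → Fin 3 → ℝ := ![![1 - ζ', ζ', 0], ![0, 1, 0]]
         hFun2 P ε = 1 - ζ' * (1 - q) ∧
         IsFilter2 F ∧ privF2 P F = ε ∧ utilF2 P F = hFun2 P ε)) := by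
  obtain ⟨hp1, hp2⟩ := hp
  obtain ⟨hα1, hα2⟩ := hα
  obtain ⟨hβ1, hβ2⟩ := hβ
  intro ε hε
  obtain ⟨hε1, hε2⟩ := hε
  constructor
  · -- Case 1: Z-channel optimal
    intro hcase
    intro q ζ F
    have hqe : q = α * (1 - p) + (1 - β) * p := rfl
    have hζe : ζ = ((1 - α) * (1 - p) + (1 - β) * p - ε) / ((1 - β) * p - α * (1 - p)) := rfl
    have hFe : F = ![![1, 0, 0], ![ζ, 1 - ζ, 0]] := rfl
    clear_value q ζ F
    have hD : (0:ℝ) < (1 - β) * p - α * (1 - p) := by nlinarith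
    have hζD : ζ * ((1 - β) * p - α * (1 - p)) = (1 - α) * (1 - p) + (1 - β) * p - ε := by
      rw [hζe]; exact div_mul_cancel₀ _ hD.ne'
    have hζ0 : (0:ℝ) ≤ ζ := by
      rw [hζe]; exact div_nonneg (by linarith) hD.le
    have hζub : ζ * ((1 - β) * p - α * (1 - p)) ≤ (1 - α) * (1 - p) - β * p := by
      rw [hζD]; linarith
    have hζ1 : ζ ≤ 1 := by rw [hζe, div_le_one hD]; linarith
    have hq05 : (α * (1 - p) + (1 - β) * p) * ((1 - α) * (1 - p) - β * p)
        ≤ (1 - (α * (1 - p) + (1 - β) * p)) * ((1 - β) * p - α * (1 - p)) := by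
      linarith [hcase]
    have hqnn : (0:ℝ) ≤ α * (1 - p) + (1 - β) * p := by
      linarith [mul_nonneg hα1 (show (0:ℝ) ≤ 1 - p by linarith),
        mul_nonneg (show (0:ℝ) ≤ 1 - β by linarith) (show (0:ℝ) ≤ p by linarith)]
    have hfil : IsFilter2 F := by
      rw [hFe]
      constructor
      · intro y z; fin_cases y <;> fin_cases z <;> simp <;> linarith
      · intro y; fin_cases y <;> simp [Fin.sum_univ_three]
    have hpriv : privF2 P F = ε := by
      rw [hFe]
      simp only [privF2, Fin.sum_univ_two, Fin.sum_univ_three, iSup_fin2, h00, h01, h10, h11,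
        Matrix.cons_val_zero, Matrix.cons_val_one, Matrix.head_cons, Matrix.cons_val_two,
        Matrix.tail_cons, mul_zero, mul_one, add_zero, zero_add, max_self]
      rw [max_eq_left (by linarith [hζub]),
        max_eq_right (by linarith [mul_nonneg hD.le (show (0:ℝ) ≤ 1 - ζ by linarith)])]
      linear_combination -hζD
    have hqζ : (α * (1 - p) + (1 - β) * p) * ζ ≤ 1 - (α * (1 - p) + (1 - β) * p) :=
      (mul_le_mul_iff_left₀ hD).mp
        (by linarith [mul_le_mul_of_nonneg_left hζub hqnn, hq05])
    have hutil : utilF2 P F = 1 - ζ * q := by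
      rw [hFe, hqe]
      simp only [utilF2, Fin.sum_univ_two, Fin.sum_univ_three, iSup_fin2, h00, h01, h10, h11,
        Matrix.cons_val_zero, Matrix.cons_val_one, Matrix.head_cons, Matrix.cons_val_two,
        Matrix.tail_cons, mul_zero, mul_one, add_zero, zero_add, max_self]
      rw [max_eq_left (by linarith [hqζ]),
        max_eq_right (by linarith [mul_nonneg hqnn (show (0:ℝ) ≤ 1 - ζ by linarith)])]
      ring
    set c : ℝ := (α * (1 - p) + (1 - β) * p) / ((1 - β) * p - α * (1 - p)) with hc_def
    set lam : ℝ := 1 - q - c * ((1 - p) * (1 - α)) with hlam_def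
    set mu : ℝ := -(c * ((1 - p) * α)) with hmu_def
    have hc0 : (0:ℝ) ≤ c := by rw [hc_def]; exact div_nonneg hqnn hD.le
    have hcD : c * ((1 - β) * p - α * (1 - p)) = α * (1 - p) + (1 - β) * p := by
      rw [hc_def]; exact div_mul_cancel₀ _ hD.ne'
    have hm0 : P 0 0 + P 1 0 = 1 - q := by rw [h00, h10, hqe]; ring
    have hm1 : P 0 1 + P 1 1 = q := by rw [h01, h11, hqe]; ring
    have h1 : 1 - q ≤ lam + c * P 0 0 := le_of_eq (by rw [h00, hlam_def]; ring)
    have h2 : 0 ≤ mu + c * P 0 1 := le_of_eq (by rw [h01, hmu_def]; ring)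
    have h4 : q ≤ mu + c * P 1 1 := le_of_eq (by rw [h11, hmu_def, hqe]; linear_combination -hcD)
    have h3 : 0 ≤ lam + c * P 1 0 := by
      have h3' : c * ((1 - p) * (1 - α) - p * β) ≤ 1 - (α * (1 - p) + (1 - β) * p) := by
        rw [hc_def, div_mul_eq_mul_div, div_le_iff₀ hD]
        linarith [hq05]
      rw [h10, hlam_def, hqe]
      linarith [h3']
    have hub : ∀ u ∈ {u | ∃ G, IsFilter2 G ∧ privF2 P G ≤ ε ∧ u = utilF2 P G},
        u ≤ 1 - ζ * q := by
      rintro u ⟨G, hG, hGp, rfl⟩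
      have hle := util_le P lam mu c q hc0 hm0 hm1 h1 h2 h3 h4 G hG
      have hv : lam + mu + c * ε = 1 - ζ * q := by
        rw [hlam_def, hmu_def, hc_def, hζe, hqe]
        linear_combination (α * (1 - p) + (1 - β) * p) * mul_inv_cancel₀ hD.ne'
      linarith [hle, hv, mul_le_mul_of_nonneg_left hGp hc0]
    have hfun : hFun2 P ε = 1 - ζ * q := by
      have hgr : IsGreatest {u | ∃ G, IsFilter2 G ∧ privF2 P G ≤ ε ∧ u = utilF2 P G}
          (1 - ζ * q) := ⟨⟨F, hfil, le_of_eq hpriv, hutil.symm⟩, hub⟩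
      exact hgr.csSup_eq
    exact ⟨hfun, hfil, hpriv, by rw [hutil, hfun]⟩
  · -- Case 2: reverse Z-channel optimal
    intro hcase
    intro q ζ' F
    have hqe : q = α * (1 - p) + (1 - β) * p := rfl
    have hζe : ζ' = ((1 - α) * (1 - p) + (1 - β) * p - ε) / ((1 - α) * (1 - p) - β * p) := rfl
    have hFe : F = ![![1 - ζ', ζ', 0], ![0, 1, 0]] := rfl
    clear_value q ζ' F
    have hD : (0:ℝ) < (1 - α) * (1 - p) - β * p := by linarith
    have hζD : ζ' * ((1 - α) * (1 - p) - β * p) = (1 - α) * (1 - p) + (1 - β) * p - ε := by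
      rw [hζe]; exact div_mul_cancel₀ _ hD.ne'
    have hζ0 : (0:ℝ) ≤ ζ' := by
      rw [hζe]; exact div_nonneg (by linarith) hD.le
    have hζub : ζ' * ((1 - α) * (1 - p) - β * p) ≤ (1 - α) * (1 - p) - β * p := by
      rw [hζD]; linarith
    have hζ1 : ζ' ≤ 1 := by rw [hζe, div_le_one hD]; linarith
    have hq05 : (1 - (α * (1 - p) + (1 - β) * p)) * ((1 - β) * p - α * (1 - p))
        ≤ (α * (1 - p) + (1 - β) * p) * ((1 - α) * (1 - p) - β * p) := by
      linarith [hcase]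
    have hqnn : (0:ℝ) ≤ 1 - (α * (1 - p) + (1 - β) * p) := by
      linarith [mul_nonneg (show (0:ℝ) ≤ 1 - α by linarith) (show (0:ℝ) ≤ 1 - p by linarith),
        mul_nonneg hβ1 (show (0:ℝ) ≤ p by linarith)]
    have hfil : IsFilter2 F := by
      rw [hFe]
      constructor
      · intro y z; fin_cases y <;> fin_cases z <;> simp <;> linarith
      · intro y; fin_cases y <;> simp [Fin.sum_univ_three]
    have hpriv : privF2 P F = ε := by
      rw [hFe]
      simp only [privF2, Fin.sum_univ_two, Fin.sum_univ_three, iSup_fin2, h00, h01, h10, h11,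
        Matrix.cons_val_zero, Matrix.cons_val_one, Matrix.head_cons, Matrix.cons_val_two,
        Matrix.tail_cons, mul_zero, mul_one, add_zero, zero_add, max_self]
      rw [max_eq_left (by linarith [mul_nonneg hD.le (show (0:ℝ) ≤ 1 - ζ' by linarith)]),
        max_eq_right (by linarith [hζD])]
      linear_combination -hζD
    have hqζ : (1 - (α * (1 - p) + (1 - β) * p)) * ζ' ≤ α * (1 - p) + (1 - β) * p :=
      (mul_le_mul_iff_left₀ hD).mp
        (by linarith [mul_le_mul_of_nonneg_left hζub hqnn, hq05,
          mul_nonneg hqnn (show (0:ℝ) ≤ 2 * p - 1 by linarith)])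
    have hutil : utilF2 P F = 1 - ζ' * (1 - q) := by
      rw [hFe, hqe]
      simp only [utilF2, Fin.sum_univ_two, Fin.sum_univ_three, iSup_fin2, h00, h01, h10, h11,
        Matrix.cons_val_zero, Matrix.cons_val_one, Matrix.head_cons, Matrix.cons_val_two,
        Matrix.tail_cons, mul_zero, mul_one, add_zero, zero_add, max_self]
      rw [max_eq_left (by linarith [mul_nonneg hqnn (show (0:ℝ) ≤ 1 - ζ' by linarith)]),
        max_eq_right (by linarith [hqζ])]
      ring
    set c : ℝ := (1 - (α * (1 - p) + (1 - β) * p)) / ((1 - α) * (1 - p) - β * p) with hc_def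
    set lam : ℝ := -(c * (p * β)) with hlam_def
    set mu : ℝ := q - c * (p * (1 - β)) with hmu_def
    have hc0 : (0:ℝ) ≤ c := by rw [hc_def]; exact div_nonneg hqnn hD.le
    have hcD : c * ((1 - α) * (1 - p) - β * p) = 1 - (α * (1 - p) + (1 - β) * p) := by
      rw [hc_def]; exact div_mul_cancel₀ _ hD.ne'
    have hm0 : P 0 0 + P 1 0 = 1 - q := by rw [h00, h10, hqe]; ring
    have hm1 : P 0 1 + P 1 1 = q := by rw [h01, h11, hqe]; ring
    have h1 : 1 - q ≤ lam + c * P 0 0 :=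
      le_of_eq (by rw [h00, hlam_def, hqe]; linear_combination -hcD)
    have h3 : 0 ≤ lam + c * P 1 0 := le_of_eq (by rw [h10, hlam_def]; ring)
    have h4 : q ≤ mu + c * P 1 1 := le_of_eq (by rw [h11, hmu_def]; ring)
    have h2 : 0 ≤ mu + c * P 0 1 := by
      have h2' : c * (p * (1 - β) - (1 - p) * α) ≤ α * (1 - p) + (1 - β) * p := by
        rw [hc_def, div_mul_eq_mul_div, div_le_iff₀ hD]
        linarith [hq05]
      rw [h01, hmu_def, hqe]
      linarith [h2']
    have hub : ∀ u ∈ {u | ∃ G, IsFilter2 G ∧ privF2 P G ≤ ε ∧ u = utilF2 P G},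
        u ≤ 1 - ζ' * (1 - q) := by
      rintro u ⟨G, hG, hGp, rfl⟩
      have hle := util_le P lam mu c q hc0 hm0 hm1 h1 h2 h3 h4 G hG
      have hv : lam + mu + c * ε = 1 - ζ' * (1 - q) := by
        rw [hlam_def, hmu_def, hc_def, hζe, hqe]
        linear_combination (1 - (α * (1 - p) + (1 - β) * p)) * mul_inv_cancel₀ hD.ne'
      linarith [hle, hv, mul_le_mul_of_nonneg_left hGp hc0]
    have hfun : hFun2 P ε = 1 - ζ' * (1 - q) := by
      have hgr : IsGreatest {u | ∃ G, IsFilter2 G ∧ privF2 P G ≤ ε ∧ u = utilF2 P G}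
          (1 - ζ' * (1 - q)) := ⟨⟨F, hfil, le_of_eq hpriv, hutil.symm⟩, hub⟩
      exact hgr.csSup_eq
    exact ⟨hfun, hfil, hpriv, by rw [hutil, hfun]⟩
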